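/- For every x ∈ X and every continuous compactly supported f : ℝ² → C(X), the integral operator K_x(f) on L²(ℝ²; ℂ) with kernel k(g,g') = f(g'−g)(g·x) is a bounded operator, with operator norm at most the L¹ bound ‖K_x(f)‖ ≤ ∫_{ℝ²} ‖f(g)‖_{C(X)} dg, where ‖·‖_{C(X)} is the sup norm. -/

import Mathlib

open MeasureTheory
open scoped ENNReal

private lemma young_aux
    (Φ : ℝ × ℝ → ℝ≥0∞) (hΦ : Measurable Φ)
    (k : ℝ × ℝ → ℝ × ℝ → ℂ)
    (hkΦ : ∀ g g', (‖k g g'‖₊ : ℝ≥0∞) ≤ Φ (g' - g))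
    (u : ℝ × ℝ → ℂ) (hu : StronglyMeasurable u) :
    ∫⁻ g : ℝ × ℝ, (‖∫ g' : ℝ × ℝ, k g g' * u g'‖₊ : ℝ≥0∞) ^ (2:ℝ) ≤
      (∫⁻ h : ℝ × ℝ, Φ h) ^ (2:ℝ) *
        ∫⁻ g' : ℝ × ℝ, (‖u g'‖₊ : ℝ≥0∞) ^ (2:ℝ) := by
  set C := ∫⁻ h : ℝ × ℝ, Φ h with hCdef
  set V : ℝ × ℝ → ℝ≥0∞ := fun g' => (‖u g'‖₊ : ℝ≥0∞) with hVdef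
  have hV : Measurable V := hu.measurable.enorm
  have hV2 : Measurable fun g' => V g' ^ (2:ℝ) := hV.pow_const _
  have hsub' : ∀ g' : ℝ × ℝ, ∫⁻ g, Φ (g' - g) = C := fun g' =>
    (Measure.measurePreserving_sub_left volume g').lintegral_comp hΦ
  have hsub : ∀ g : ℝ × ℝ, ∫⁻ g', Φ (g' - g) = C := fun g => by
    simpa [sub_eq_add_neg] using (measurePreserving_add_right volume (-g)).lintegral_comp hΦ
  have half : ∀ a : ℝ≥0∞, a ^ (1/2:ℝ) * a ^ (1/2:ℝ) = a := fun a => by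
    rw [← ENNReal.rpow_add_of_nonneg _ _ (by norm_num) (by norm_num)]
    norm_num
  set W : ℝ × ℝ → ℝ≥0∞ := fun g => ∫⁻ g', Φ (g' - g) * V g' ^ (2:ℝ) with hWdef
  have hWmeas : Measurable W := by
    apply Measurable.lintegral_prod_right
    exact (hΦ.comp (measurable_snd.sub measurable_fst)).mul
      ((hV.comp measurable_snd).pow_const _)
  have step1 : ∀ g, (‖∫ g', k g g' * u g'‖₊ : ℝ≥0∞) ≤ ∫⁻ g', Φ (g' - g) * V g' := by
    intro g
    refine (enorm_integral_le_lintegral_enorm _).trans (lintegral_mono fun g' => ?_)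
    calc (‖k g g' * u g'‖₊ : ℝ≥0∞) = (‖k g g'‖₊ : ℝ≥0∞) * V g' := by
          rw [nnnorm_mul, ENNReal.coe_mul]
      _ ≤ Φ (g' - g) * V g' := mul_le_mul_left (hkΦ g g') _
  have step2 : ∀ g, (∫⁻ g', Φ (g' - g) * V g') ≤ C ^ (1/2:ℝ) * (W g) ^ (1/2:ℝ) := by
    intro g
    have hΦg : Measurable fun g' : ℝ × ℝ => Φ (g' - g) :=
      hΦ.comp (measurable_id.sub measurable_const)
    have hconj : (2:ℝ).HolderConjugate 2 := Real.HolderConjugate.two_two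
    have h := ENNReal.lintegral_mul_le_Lp_mul_Lq volume hconj
      (f := fun g' => (Φ (g' - g)) ^ (1/2:ℝ))
      (g := fun g' => (Φ (g' - g)) ^ (1/2:ℝ) * V g')
      ((hΦg.pow_const _).aemeasurable) (((hΦg.pow_const _).mul hV).aemeasurable)
    have e1 : ∀ g' : ℝ × ℝ,
        ((fun g' => (Φ (g' - g)) ^ (1/2:ℝ)) * fun g' => (Φ (g' - g)) ^ (1/2:ℝ) * V g') g'
          = Φ (g' - g) * V g' := by
      intro g'
      simp only [Pi.mul_apply]
      rw [← mul_assoc, half]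
    have e2 : ∀ g' : ℝ × ℝ, ((Φ (g' - g)) ^ (1/2:ℝ)) ^ (2:ℝ) = Φ (g' - g) := by
      intro g'
      rw [← ENNReal.rpow_mul]
      norm_num
    have e3 : ∀ g' : ℝ × ℝ,
        ((Φ (g' - g)) ^ (1/2:ℝ) * V g') ^ (2:ℝ) = Φ (g' - g) * V g' ^ (2:ℝ) := by
      intro g'
      rw [ENNReal.mul_rpow_of_nonneg _ _ (by norm_num : (0:ℝ) ≤ 2), ← ENNReal.rpow_mul]
      norm_num
    calc (∫⁻ g', Φ (g' - g) * V g')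
        = ∫⁻ g', ((fun g' => (Φ (g' - g)) ^ (1/2:ℝ)) *
            fun g' => (Φ (g' - g)) ^ (1/2:ℝ) * V g') g' := by
          refine lintegral_congr fun g' => (e1 g').symm
      _ ≤ (∫⁻ g', ((Φ (g' - g)) ^ (1/2:ℝ)) ^ (2:ℝ)) ^ (1/2:ℝ) *
            (∫⁻ g', ((Φ (g' - g)) ^ (1/2:ℝ) * V g') ^ (2:ℝ)) ^ (1/2:ℝ) := h
      _ = C ^ (1/2:ℝ) * (W g) ^ (1/2:ℝ) := by
          rw [lintegral_congr e2, lintegral_congr e3, hsub g]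
  have step3 : ∀ g, (‖∫ g', k g g' * u g'‖₊ : ℝ≥0∞) ^ (2:ℝ) ≤ C * W g := by
    intro g
    have h2 := ENNReal.rpow_le_rpow ((step1 g).trans (step2 g)) (by norm_num : (0:ℝ) ≤ 2)
    refine h2.trans_eq ?_
    rw [ENNReal.mul_rpow_of_nonneg _ _ (by norm_num : (0:ℝ) ≤ 2),
      ← ENNReal.rpow_mul, ← ENNReal.rpow_mul]
    norm_num
  have swap : ∫⁻ g, W g = ∫⁻ g', (∫⁻ g, Φ (g' - g)) * V g' ^ (2:ℝ) := by
    rw [hWdef]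
    have := lintegral_lintegral_swap (μ := (volume : Measure (ℝ × ℝ)))
      (ν := (volume : Measure (ℝ × ℝ)))
      (f := fun g g' => Φ (g' - g) * V g' ^ (2:ℝ))
      (((hΦ.comp (measurable_snd.sub measurable_fst)).mul
        ((hV.comp measurable_snd).pow_const _)).aemeasurable)
    rw [this]
    refine lintegral_congr fun g' => ?_
    have hm : Measurable fun g : ℝ × ℝ => Φ (g' - g) :=
      hΦ.comp (measurable_const.sub measurable_id)
    exact lintegral_mul_const _ hm
  calc ∫⁻ g, (‖∫ g', k g g' * u g'‖₊ : ℝ≥0∞) ^ (2:ℝ)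
      ≤ ∫⁻ g, C * W g := lintegral_mono step3
    _ = C * ∫⁻ g, W g := lintegral_const_mul C hWmeas
    _ = C * ∫⁻ g', C * V g' ^ (2:ℝ) := by
        rw [swap]
        congr 1
        exact lintegral_congr fun g' => by rw [hsub']
    _ = C ^ (2:ℝ) * ∫⁻ g', V g' ^ (2:ℝ) := by
        rw [lintegral_const_mul C hV2, ← mul_assoc]
        congr 1
        rw [show (2:ℝ) = ((2:ℕ):ℝ) by norm_num, ENNReal.rpow_natCast, sq]

/-- for every `x ∈ X` and every continuous compactly supported
`f : ℝ² → C(X)`, the integral operator on `L²(ℝ²;ℂ)` with kernel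
`k(g,g') = f(g'−g)(g·x)` is bounded, with `‖K_x(f)‖ ≤ ∫ ‖f(g)‖_{C(X)} dg`. -/
theorem crossRep_bounded
    {X : Type*} [TopologicalSpace X] [CompactSpace X] [T2Space X]
    (act : ℝ × ℝ → X → X)
    (hact0 : ∀ x, act 0 x = x)
    (hactadd : ∀ g g' x, act (g + g') x = act g (act g' x))
    (hcont : Continuous fun p : (ℝ × ℝ) × X => act p.1 p.2)
    (x : X)
    (f : ℝ × ℝ → C(X, ℂ)) (hf : Continuous f) (hfs : HasCompactSupport f) :
    ∃ K : Lp ℂ 2 (volume : Measure (ℝ × ℝ)) →L[ℂ] Lp ℂ 2 (volume : Measure (ℝ × ℝ)),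
      (∀ u : Lp ℂ 2 (volume : Measure (ℝ × ℝ)),
        ∀ᵐ g : ℝ × ℝ, (K u : ℝ × ℝ → ℂ) g = ∫ g' : ℝ × ℝ, f (g' - g) (act g x) * u g') ∧
      ‖K‖ ≤ ∫ g : ℝ × ℝ, ‖f g‖ := by
  set k : ℝ × ℝ → ℝ × ℝ → ℂ := fun g g' => f (g' - g) (act g x) with hkdef
  set Cr : ℝ := ∫ g : ℝ × ℝ, ‖f g‖ with hCrdef
  have hC0 : 0 ≤ Cr := integral_nonneg fun g => norm_nonneg _
  set Φ : ℝ × ℝ → ℝ≥0∞ := fun h => (‖f h‖₊ : ℝ≥0∞) with hΦdef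
  have hΦmeas : Measurable Φ :=
    measurable_coe_nnreal_ennreal.comp hf.nnnorm.measurable
  have hintn : Integrable (fun g : ℝ × ℝ => ‖f g‖) volume :=
    hf.norm.integrable_of_hasCompactSupport hfs.norm
  have hIΦ : (∫⁻ h : ℝ × ℝ, Φ h) = ENNReal.ofReal Cr := by
    rw [hCrdef, ofReal_integral_eq_lintegral_ofReal hintn
      (Filter.Eventually.of_forall fun _ => norm_nonneg _)]
    exact lintegral_congr fun h => (ofReal_norm _).symm
  have hkΦ : ∀ g g', (‖k g g'‖₊ : ℝ≥0∞) ≤ Φ (g' - g) := by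
    intro g g'
    refine ENNReal.coe_le_coe.mpr ?_
    rw [← NNReal.coe_le_coe, coe_nnnorm, coe_nnnorm]
    exact ContinuousMap.norm_coe_le_norm (f (g' - g)) (act g x)
  have hkcont : Continuous fun p : (ℝ × ℝ) × (ℝ × ℝ) => k p.1 p.2 := by
    have h1 : Continuous fun p : (ℝ × ℝ) × (ℝ × ℝ) => f (p.2 - p.1) :=
      hf.comp (continuous_snd.sub continuous_fst)
    have h2 : Continuous fun p : (ℝ × ℝ) × (ℝ × ℝ) => act p.1 x :=
      hcont.comp (continuous_fst.prodMk continuous_const)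
    exact continuous_eval.comp (h1.prodMk h2)
  -- the integral operator as a plain function
  set T : Lp ℂ 2 (volume : Measure (ℝ × ℝ)) → (ℝ × ℝ) → ℂ :=
    fun u g => ∫ g' : ℝ × ℝ, k g g' * u g' with hTdef
  -- Memℒp 2 of the kernel slices
  have hmemk : ∀ g : ℝ × ℝ, MemLp (fun g' => k g g') 2 (volume : Measure (ℝ × ℝ)) := by
    intro g
    have hc : Continuous fun g' : ℝ × ℝ => k g g' :=
      hkcont.comp (continuous_const.prodMk continuous_id)
    have hcs : HasCompactSupport fun g' : ℝ × ℝ => k g g' := by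
      have h1 : HasCompactSupport fun g' : ℝ × ℝ => f (g' - g) :=
        hfs.comp_homeomorph (Homeomorph.subRight g)
      exact h1.comp_left (g := fun c : C(X, ℂ) => c (act g x)) rfl
    exact hc.memLp_of_hasCompactSupport hcs
  have hint : ∀ (g : ℝ × ℝ) (u : Lp ℂ 2 (volume : Measure (ℝ × ℝ))),
      Integrable (fun g' => k g g' * (u : ℝ × ℝ → ℂ) g') volume := by
    intro g u
    have := (Lp.memLp u).smul (hmemk g) (r := 1)
    exact memLp_one_iff_integrable.mp this
  -- measurability of T u
  have hmeasT : ∀ u, AEStronglyMeasurable (T u) (volume : Measure (ℝ × ℝ)) := by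
    intro u
    exact (hkcont.aestronglyMeasurable.mul
      (Lp.aestronglyMeasurable u).comp_snd).integral_prod_right'
  -- key norm bound
  have key : ∀ u : Lp ℂ 2 (volume : Measure (ℝ × ℝ)),
      eLpNorm (T u) 2 volume ≤ ENNReal.ofReal Cr * eLpNorm (u : ℝ × ℝ → ℂ) 2 volume := by
    intro u
    have hu := Lp.aestronglyMeasurable u
    set u' := hu.mk (u : ℝ × ℝ → ℂ) with hu'def
    have hu's : StronglyMeasurable u' := hu.stronglyMeasurable_mk
    have huu' : (u : ℝ × ℝ → ℂ) =ᵐ[volume] u' := hu.ae_eq_mk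
    have hT : T u = fun g => ∫ g', k g g' * u' g' := by
      funext g
      exact integral_congr_ae (huu'.mono fun g' h => by simp only [h])
    have hyoung := young_aux Φ hΦmeas k hkΦ u' hu's
    rw [eLpNorm_eq_lintegral_rpow_enorm_toReal two_ne_zero ENNReal.ofNat_ne_top,
      eLpNorm_eq_lintegral_rpow_enorm_toReal two_ne_zero ENNReal.ofNat_ne_top]
    simp only [ENNReal.toReal_ofNat]
    have hLHS : (∫⁻ g, (‖T u g‖₊ : ℝ≥0∞) ^ (2:ℝ)) ≤
        (ENNReal.ofReal Cr) ^ (2:ℝ) * ∫⁻ g', (‖u' g'‖₊ : ℝ≥0∞) ^ (2:ℝ) := by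
      rw [hT, ← hIΦ]
      exact hyoung
    calc (∫⁻ g, (‖T u g‖₊ : ℝ≥0∞) ^ (2:ℝ)) ^ (1/(2:ℝ))
        ≤ ((ENNReal.ofReal Cr) ^ (2:ℝ) * ∫⁻ g', (‖u' g'‖₊ : ℝ≥0∞) ^ (2:ℝ)) ^ (1/(2:ℝ)) :=
          ENNReal.rpow_le_rpow hLHS (by norm_num)
      _ = ENNReal.ofReal Cr *
          (∫⁻ g', (‖(u : ℝ × ℝ → ℂ) g'‖₊ : ℝ≥0∞) ^ (2:ℝ)) ^ (1/(2:ℝ)) := by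
          have hAB : (∫⁻ g', (‖u' g'‖₊ : ℝ≥0∞) ^ (2:ℝ))
              = ∫⁻ g', (‖(u : ℝ × ℝ → ℂ) g'‖₊ : ℝ≥0∞) ^ (2:ℝ) :=
            lintegral_congr_ae (huu'.mono fun g' h => by simp only [h])
          rw [hAB, ENNReal.mul_rpow_of_nonneg _ _ (by norm_num : (0:ℝ) ≤ 1/2),
            ← ENNReal.rpow_mul]
          norm_num
  have hTmem : ∀ u, MemLp (T u) 2 (volume : Measure (ℝ × ℝ)) := by
    intro u
    refine ⟨hmeasT u, (key u).trans_lt ?_⟩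
    exact ENNReal.mul_lt_top ENNReal.ofReal_lt_top (Lp.eLpNorm_lt_top u)
  -- the linear map
  set L : Lp ℂ 2 (volume : Measure (ℝ × ℝ)) →ₗ[ℂ] Lp ℂ 2 (volume : Measure (ℝ × ℝ)) :=
    { toFun := fun u => (hTmem u).toLp (T u)
      map_add' := by
        intro u v
        have h1 : T (u + v) = T u + T v := by
          funext g
          have hadd := Lp.coeFn_add u v
          calc T (u + v) g
              = ∫ g', (k g g' * (u : ℝ × ℝ → ℂ) g' + k g g' * (v : ℝ × ℝ → ℂ) g') := by
                refine integral_congr_ae (hadd.mono fun g' h => ?_)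
                simp only [h, Pi.add_apply]
                ring
            _ = T u g + T v g := integral_add (hint g u) (hint g v)
        have h2 : (hTmem (u + v)).toLp (T (u + v)) =
            ((hTmem u).add (hTmem v)).toLp (T u + T v) :=
          MemLp.toLp_congr _ _ (by rw [h1])
        exact h2.trans (MemLp.toLp_add (hTmem u) (hTmem v))
      map_smul' := by
        intro c u
        have h1 : T (c • u) = c • T u := by
          funext g
          have hsmul := Lp.coeFn_smul c u
          calc T (c • u) g = ∫ g', c • (k g g' * (u : ℝ × ℝ → ℂ) g') := by
                refine integral_congr_ae (hsmul.mono fun g' h => ?_)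
                simp only [h, Pi.smul_apply, smul_eq_mul]
                ring
            _ = c • T u g := integral_smul c _
        have h2 : (hTmem (c • u)).toLp (T (c • u)) =
            ((hTmem u).const_smul c).toLp (c • T u) :=
          MemLp.toLp_congr _ _ (by rw [h1])
        exact h2.trans (MemLp.toLp_const_smul c (hTmem u)) } with hLdef
  have hbound : ∀ u, ‖L u‖ ≤ Cr * ‖u‖ := by
    intro u
    have hLu : ‖L u‖ = (eLpNorm (T u) 2 volume).toReal := Lp.norm_toLp (T u) (hTmem u)
    rw [hLu]
    have h1 := key u
    have h2 : ENNReal.ofReal Cr * eLpNorm (u : ℝ × ℝ → ℂ) 2 volume ≠ ⊤ :=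
      (ENNReal.mul_lt_top ENNReal.ofReal_lt_top (Lp.eLpNorm_lt_top u)).ne
    calc (eLpNorm (T u) 2 volume).toReal
        ≤ (ENNReal.ofReal Cr * eLpNorm (u : ℝ × ℝ → ℂ) 2 volume).toReal :=
          ENNReal.toReal_mono h2 h1
      _ = Cr * ‖u‖ := by
          rw [ENNReal.toReal_mul, ENNReal.toReal_ofReal hC0, Lp.norm_def]
  refine ⟨L.mkContinuous Cr hbound, fun u => ?_, L.mkContinuous_norm_le hC0 hbound⟩
  have : (L.mkContinuous Cr hbound u : ℝ × ℝ → ℂ) =ᵐ[volume] T u := by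
    simpa [hLdef] using MemLp.coeFn_toLp (hTmem u)
  exact this.mono fun g h => by simp only [h]; rfl
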